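/- Let W : ℝ^{3×3} → [0,∞] be frame indifferent, i.e. W(RF) = W(F) for all F ∈ ℝ^{3×3} and R ∈ SO(3), and admit a quadratic expansion at the identity with quadratic form Q: lim_{G→0}(W(I+G) − Q(G))/|G|² = 0. Then Q(G) = Q(sym G) for every G ∈ ℝ^{3×3}, i.e. Q vanishes on skew-symmetric matrices and depends only on the symmetric part of its argument. -/

import Mathlib

open Matrix Filter Topology

noncomputable section

def frob3 (M : Matrix (Fin 3) (Fin 3) ℝ) : ℝ := Real.sqrt (∑ i, ∑ j, (M i j) ^ 2)

def SO3 : Set (Matrix (Fin 3) (Fin 3) ℝ) := {R | Rᵀ * R = 1 ∧ R.det = 1}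

def sym3 (G : Matrix (Fin 3) (Fin 3) ℝ) : Matrix (Fin 3) (Fin 3) ℝ := (1 / 2 : ℝ) • (G + Gᵀ)

open NormedSpace
namespace Stmt2Aux

abbrev Mat := Matrix (Fin 3) (Fin 3) ℝ

lemma frob3_eq_zero {M : Mat} (h : frob3 M = 0) : M = 0 := by
  unfold frob3 at h
  have hs : (∑ i, ∑ j, (M i j) ^ 2) = 0 := by
    have hnn : 0 ≤ ∑ i, ∑ j, (M i j) ^ 2 :=
      Finset.sum_nonneg fun i _ => Finset.sum_nonneg fun j _ => sq_nonneg _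
    nlinarith [Real.sq_sqrt hnn, Real.sqrt_nonneg (∑ i, ∑ j, (M i j) ^ 2)]
  ext i j
  have h1 := (Finset.sum_eq_zero_iff_of_nonneg
    (fun i _ => Finset.sum_nonneg fun j _ => sq_nonneg (M i j))).mp hs i (Finset.mem_univ i)
  have h2 := (Finset.sum_eq_zero_iff_of_nonneg
    (fun j _ => sq_nonneg (M i j))).mp h1 j (Finset.mem_univ j)
  simpa using (pow_eq_zero_iff two_ne_zero).mp h2

lemma frob3_smul (c : ℝ) (M : Mat) : frob3 (c • M) = |c| * frob3 M := by
  unfold frob3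
  simp only [Matrix.smul_apply, smul_eq_mul, mul_pow, ← Finset.mul_sum]
  rw [Real.sqrt_mul (sq_nonneg c), Real.sqrt_sq_eq_abs]

lemma continuous_frob3 : Continuous frob3 := by
  unfold frob3
  apply Real.continuous_sqrt.comp
  exact continuous_finset_sum _ fun i _ => continuous_finset_sum _ fun j _ =>
    ((continuous_apply_apply i j).pow 2)

variable {W Q : Mat → ℝ} {L : Mat →ₗ[ℝ] Mat →ₗ[ℝ] ℝ}

lemma continuous_Q (hQL : ∀ G, Q G = L G G) : Continuous Q := by
  classical
  set b : Module.Basis (Fin 3 × Fin 3) ℝ Mat := Matrix.stdBasis ℝ (Fin 3) (Fin 3) with hb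
  have hrep : ∀ x : Mat, Q x = ∑ k, b.coord k x * (L (b k)) x := by
    intro x
    have h1 : L x = ∑ k, b.repr x k • L (b k) := by
      conv_lhs => rw [← b.sum_repr x]
      rw [map_sum]
      simp [_root_.map_smul]
    rw [hQL, h1, LinearMap.sum_apply]
    simp [LinearMap.smul_apply, smul_eq_mul, Module.Basis.coord_apply]
  rw [funext hrep]
  exact continuous_finset_sum _ fun k _ =>
    ((b.coord k).continuous_of_finiteDimensional.mul
      (L (b k)).continuous_of_finiteDimensional)

lemma Q_smul (hQL : ∀ G, Q G = L G G) (c : ℝ) (x : Mat) : Q (c • x) = c ^ 2 * Q x := by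
  simp only [hQL, _root_.map_smul, LinearMap.smul_apply, smul_eq_mul]
  ring

lemma key (hQL : ∀ G, Q G = L G G)
    (hexp : Tendsto (fun G => (W (1 + G) - Q G) / (frob3 G) ^ 2) (𝓝[≠] (0 : Mat)) (𝓝 0))
    {u : ℝ → Mat} {M : Mat} (hM : M ≠ 0)
    (hu : Tendsto (fun t => t⁻¹ • u t) (𝓝[≠] (0:ℝ)) (𝓝 M)) :
    Tendsto (fun t => W (1 + u t) / t ^ 2) (𝓝[≠] (0:ℝ)) (𝓝 (Q M)) := by
  have hu0 : Tendsto u (𝓝[≠] (0:ℝ)) (𝓝 (0:Mat)) := by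
    have h1 : Tendsto (fun t : ℝ => t • (t⁻¹ • u t)) (𝓝[≠] (0:ℝ)) (𝓝 ((0:ℝ) • M)) :=
      (tendsto_id.mono_left nhdsWithin_le_nhds).smul hu
    rw [zero_smul] at h1
    refine h1.congr' ?_
    filter_upwards [self_mem_nhdsWithin] with t ht
    rw [smul_smul, mul_inv_cancel₀ ht, one_smul]
  have hune : ∀ᶠ t in 𝓝[≠](0:ℝ), u t ≠ 0 := by
    filter_upwards [hu.eventually (eventually_ne_nhds hM), self_mem_nhdsWithin] with t h1 ht h0
    exact h1 (by rw [h0, smul_zero])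
  have hu0' : Tendsto u (𝓝[≠](0:ℝ)) (𝓝[≠] (0:Mat)) :=
    tendsto_nhdsWithin_iff.mpr ⟨hu0, hune⟩
  have h1 := hexp.comp hu0'
  have h2 : Tendsto (fun t => frob3 (u t) ^ 2 / t ^ 2) (𝓝[≠](0:ℝ)) (𝓝 (frob3 M ^ 2)) := by
    have h := ((continuous_frob3.tendsto M).comp hu).pow 2
    refine h.congr' ?_
    filter_upwards [self_mem_nhdsWithin] with t ht
    simp only [Function.comp_apply, frob3_smul, mul_pow, sq_abs, inv_pow]
    rw [inv_mul_eq_div]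
  have h3 : Tendsto (fun t => (W (1 + u t) - Q (u t)) / t ^ 2) (𝓝[≠](0:ℝ)) (𝓝 0) := by
    have h := h1.mul h2
    rw [zero_mul] at h
    refine h.congr' ?_
    filter_upwards [hune] with t ht
    have hf : frob3 (u t) ^ 2 ≠ 0 := pow_ne_zero _ fun h0 => ht (frob3_eq_zero h0)
    simp only [Function.comp_apply]
    field_simp
    rw [mul_comm (frob3 (u t)), mul_div_mul_right _ _ (by simpa using hf)]
  have h4 : Tendsto (fun t => Q (u t) / t ^ 2) (𝓝[≠](0:ℝ)) (𝓝 (Q M)) := by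
    have h := ((continuous_Q hQL).tendsto M).comp hu
    refine h.congr' ?_
    filter_upwards [self_mem_nhdsWithin] with t ht
    simp only [Function.comp_apply, Q_smul hQL, inv_pow]
    rw [inv_mul_eq_div]
  have h5 := h3.add h4
  rw [zero_add] at h5
  refine h5.congr fun t => ?_
  rw [← add_div, sub_add_cancel]

lemma exp_rot {A : Mat} (hA : Aᵀ = -A) (t : ℝ) : exp (t • A) ∈ SO3 := by
  have hmain : ∀ s : ℝ, (exp (s • A))ᵀ * exp (s • A) = 1 := by
    intro s
    rw [← Matrix.exp_transpose, transpose_smul, hA, smul_neg,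
      ← Matrix.exp_add_of_commute _ _ ((Commute.refl (s • A)).neg_left), neg_add_cancel, exp_zero]
  refine ⟨hmain t, ?_⟩
  have hsq : (exp (t • A)).det * (exp (t • A)).det = 1 := by
    have := congrArg Matrix.det (hmain t)
    rwa [det_mul, det_transpose, det_one] at this
  have h2 : exp (t • A) = exp ((t/2) • A) * exp ((t/2) • A) := by
    rw [← Matrix.exp_add_of_commute _ _ (Commute.refl _), ← add_smul]
    norm_num
  have hnn : 0 ≤ (exp (t • A)).det := by
    rw [h2, det_mul]; exact mul_self_nonneg _
  nlinarith

lemma deriv_path (A S : Mat) :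
    Tendsto (fun t : ℝ => t⁻¹ • (exp (t • A) * (1 + t • S) - 1)) (𝓝[≠](0:ℝ)) (𝓝 (A + S)) := by
  letI : NormedRing Mat := Matrix.linftyOpNormedRing
  letI : NormedAlgebra ℝ Mat := Matrix.linftyOpNormedAlgebra
  have h1 : HasDerivAt (fun t : ℝ => exp (t • A)) A 0 := by
    have h := hasDerivAt_exp_smul_const (𝕂 := ℝ) A 0
    simp at h
    exact h
  have h2 : HasDerivAt (fun t : ℝ => (1 : Mat) + t • S) S 0 := by
    have h := ((hasDerivAt_id (0:ℝ)).smul_const S).const_add (1 : Mat)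
    simp only [id, one_smul] at h
    exact h
  have h3 : HasDerivAt (fun t : ℝ => exp (t • A) * (1 + t • S) - 1) (A + S) 0 := by
    have h := (h1.mul h2).sub_const (1 : Mat)
    simp only [zero_smul, add_zero, mul_one, NormedSpace.exp_zero, one_mul] at h
    exact h
  have h4 := hasDerivAt_iff_tendsto_slope.mp h3
  refine h4.congr fun t => ?_
  simp [slope, sub_zero, Function.comp]

end Stmt2Aux

open Stmt2Aux

/-- If W is frame indifferent (W(RF) = W(F) for all R ∈ SO(3)) and admits the quadratic
expansion `W(I+G) = Q(G) + o(|G|²)` at the identity with Q a quadratic form, then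
`Q(G) = Q(sym G)` for every G. -/
theorem stmt2 (W : Matrix (Fin 3) (Fin 3) ℝ → ℝ) (hW0 : ∀ F, 0 ≤ W F)
    (hFI : ∀ (F R : Matrix (Fin 3) (Fin 3) ℝ), R ∈ SO3 → W (R * F) = W F)
    (Q : Matrix (Fin 3) (Fin 3) ℝ → ℝ)
    (L : Matrix (Fin 3) (Fin 3) ℝ →ₗ[ℝ] Matrix (Fin 3) (Fin 3) ℝ →ₗ[ℝ] ℝ)
    (hLsymm : ∀ A B, L A B = L B A) (hQL : ∀ G, Q G = L G G)
    (hexp : Tendsto (fun G => (W (1 + G) - Q G) / (frob3 G) ^ 2)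
      (𝓝[≠] (0 : Matrix (Fin 3) (Fin 3) ℝ)) (𝓝 0)) :
    ∀ G : Matrix (Fin 3) (Fin 3) ℝ, Q G = Q (sym3 G) := by
  intro G
  set S : Mat := sym3 G with hS
  set A : Mat := G - S with hA
  have hAskew : Aᵀ = -A := by
    rw [hA, hS]
    unfold sym3
    rw [transpose_sub, transpose_smul, transpose_add, transpose_transpose]
    ext i j
    simp [Matrix.sub_apply, Matrix.smul_apply, Matrix.add_apply, Matrix.neg_apply]
    ring
  by_cases hA0 : A = 0
  · have hGS : G = S := by rwa [hA, sub_eq_zero] at hA0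
    rw [← hGS]
  · have hASG : A + S = G := by rw [hA]; abel
    -- the rotated path
    set u : ℝ → Mat := fun t => exp (t • A) * (1 + t • S) - 1 with hu
    have hupath : Tendsto (fun t => t⁻¹ • u t) (𝓝[≠] (0:ℝ)) (𝓝 G) := by
      have := deriv_path A S
      rwa [hASG] at this
    have hGne : G ≠ 0 := by
      intro h0
      apply hA0
      have : S = 0 := by rw [hS, h0]; unfold sym3; simp
      rw [hA, h0, this, sub_zero]
    have hQpath : Tendsto (fun t => W (1 + u t) / t ^ 2) (𝓝[≠] (0:ℝ)) (𝓝 (Q G)) :=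
      key hQL hexp hGne hupath
    have hWeq : ∀ t : ℝ, W (1 + u t) = W (1 + t • S) := by
      intro t
      have h1 : (1 : Mat) + u t = exp (t • A) * (1 + t • S) := by
        show (1 : Mat) + (exp (t • A) * (1 + t • S) - 1) = exp (t • A) * (1 + t • S)
        rw [add_comm, sub_add_cancel]
      rw [h1, hFI _ _ (exp_rot hAskew t)]
    by_cases hS0 : S = 0
    · -- W(1 + t•S) = W 1, deduce W 1 = 0 and Q G = 0
      have hc : Tendsto (fun t : ℝ => W 1 / t ^ 2) (𝓝[≠] (0:ℝ)) (𝓝 (Q G)) := by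
        refine hQpath.congr fun t => ?_
        rw [hWeq, hS0]; simp
      have ht2 : Tendsto (fun t : ℝ => t ^ 2) (𝓝[≠] (0:ℝ)) (𝓝 0) := by
        have h := ((continuous_pow 2).tendsto (0:ℝ)).mono_left
          (nhdsWithin_le_nhds (s := {(0:ℝ)}ᶜ))
        simpa using h
      have hWconst : Tendsto (fun _ : ℝ => W 1) (𝓝[≠] (0:ℝ)) (𝓝 (Q G * 0)) := by
        refine (hc.mul ht2).congr' ?_
        filter_upwards [self_mem_nhdsWithin] with t ht
        have ht' : (t : ℝ) ≠ 0 := ht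
        rw [div_mul_cancel₀ _ (pow_ne_zero 2 ht')]
      have hW1 : W 1 = 0 := by
        have := tendsto_const_nhds_iff.mp hWconst
        rw [this, mul_zero]
      have hQG : Q G = 0 := by
        have hzero : Tendsto (fun _ : ℝ => (0:ℝ)) (𝓝[≠] (0:ℝ)) (𝓝 (Q G)) := by
          refine hc.congr fun t => ?_
          rw [hW1, zero_div]
        exact (tendsto_const_nhds_iff.mp hzero).symm
      rw [hQG, hS0, hQL]
      simp
    · have hSpath : Tendsto (fun t : ℝ => t⁻¹ • (t • S)) (𝓝[≠] (0:ℝ)) (𝓝 S) := by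
        refine tendsto_const_nhds.congr' ?_
        filter_upwards [self_mem_nhdsWithin] with t ht
        rw [smul_smul, inv_mul_cancel₀ ht, one_smul]
      have hQS : Tendsto (fun t => W (1 + t • S) / t ^ 2) (𝓝[≠] (0:ℝ)) (𝓝 (Q S)) :=
        key hQL hexp hS0 hSpath
      have hQG : Tendsto (fun t => W (1 + t • S) / t ^ 2) (𝓝[≠] (0:ℝ)) (𝓝 (Q G)) := by
        refine hQpath.congr fun t => ?_
        rw [hWeq]
      exact tendsto_nhds_unique hQG hQS

end
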